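/- Let G be a P5-free graph, let C ⊆ V(G) be nonempty such that the induced subgraph G[C] is connected and C admits a partition into two sets that are independent in G (so G[C] is bipartite). Let D ⊆ C with |D| ≤ 3 and C ⊆ N[D] (D dominates C). Let R = N(C) \ N(D), and assume that the vertex set of every connected component of the induced subgraph G[R] is a module in G. Then there exists a set D̃ ⊆ R ∪ C with D ⊆ D̃ and |D̃ \ D| ≤ 3 (hence |D̃| ≤ 6) such that D̃ is a dominating set of the induced subgraph G[R ∪ C], i.e., every vertex of R ∪ C lies in D̃ or is adjacent in G to a vertex of D̃. -/

import Mathlib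

open SimpleGraph

/-- A graph is `P₅`-free if it contains no induced subgraph isomorphic to the
path on five vertices (i.e. no graph embedding of `pathGraph 5`). -/
def P5Free {V : Type*} (G : SimpleGraph V) : Prop :=
  IsEmpty (SimpleGraph.pathGraph 5 ↪g G)

/-- `N(A)`: the set of vertices outside `A` with a neighbor in `A`. -/
def nbhdSet {V : Type*} (G : SimpleGraph V) (A : Set V) : Set V :=
  {v | v ∉ A ∧ ∃ a ∈ A, G.Adj v a}

/-- `N[A] = N(A) ∪ A`. -/
def closedNbhdSet {V : Type*} (G : SimpleGraph V) (A : Set V) : Set V :=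
  nbhdSet G A ∪ A

/-- A set of vertices is independent in `G`. -/
def SetIndep {V : Type*} (G : SimpleGraph V) (A : Set V) : Prop :=
  ∀ x ∈ A, ∀ y ∈ A, ¬ G.Adj x y

/-- `M` is a module in `G`: every vertex outside `M` is adjacent to all of `M`
or to none of `M`. -/
def IsModule {V : Type*} (G : SimpleGraph V) (M : Set V) : Prop :=
  ∀ u ∉ M, (∀ m ∈ M, G.Adj u m) ∨ (∀ m ∈ M, ¬ G.Adj u m)

lemma no_induced_P5 {V : Type*} {G : SimpleGraph V} (hP5 : P5Free G)
    {v0 v1 v2 v3 v4 : V}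
    (h01 : G.Adj v0 v1) (h12 : G.Adj v1 v2) (h23 : G.Adj v2 v3) (h34 : G.Adj v3 v4)
    (h02 : ¬ G.Adj v0 v2) (h03 : ¬ G.Adj v0 v3) (h04 : ¬ G.Adj v0 v4)
    (h13 : ¬ G.Adj v1 v3) (h14 : ¬ G.Adj v1 v4) (h24 : ¬ G.Adj v2 v4) : False := by
  have n01 : v0 ≠ v1 := h01.ne
  have n12 : v1 ≠ v2 := h12.ne
  have n23 : v2 ≠ v3 := h23.ne
  have n34 : v3 ≠ v4 := h34.ne
  have n02 : v0 ≠ v2 := by rintro rfl; exact h03 h23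
  have n03 : v0 ≠ v3 := by rintro rfl; exact h04 h34
  have n04 : v0 ≠ v4 := by rintro rfl; exact h14 h01.symm
  have n13 : v1 ≠ v3 := by rintro rfl; exact h14 h34
  have n14 : v1 ≠ v4 := by rintro rfl; exact h13 h34.symm
  have n24 : v2 ≠ v4 := by rintro rfl; exact h14 h12
  have s01 : G.Adj v1 v0 := h01.symm
  have s12 : G.Adj v2 v1 := h12.symm
  have s23 : G.Adj v3 v2 := h23.symm
  have s34 : G.Adj v4 v3 := h34.symm
  have m02 : ¬ G.Adj v2 v0 := fun h => h02 h.symm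
  have m03 : ¬ G.Adj v3 v0 := fun h => h03 h.symm
  have m04 : ¬ G.Adj v4 v0 := fun h => h04 h.symm
  have m13 : ¬ G.Adj v3 v1 := fun h => h13 h.symm
  have m14 : ¬ G.Adj v4 v1 := fun h => h14 h.symm
  have m24 : ¬ G.Adj v4 v2 := fun h => h24 h.symm
  have h5 : IsEmpty (SimpleGraph.pathGraph 5 ↪g G) := hP5
  refine h5.false ⟨⟨![v0, v1, v2, v3, v4], ?_⟩, ?_⟩
  · intro a b hab
    fin_cases a <;> fin_cases b <;> simp_all
  · intro a b
    change G.Adj (![v0, v1, v2, v3, v4] a) (![v0, v1, v2, v3, v4] b) ↔ (pathGraph 5).Adj a b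
    fin_cases a <;> fin_cases b <;>
      simp [pathGraph_adj, h01, h12, h23, h34, s01, s12, s23, s34,
        h02, h03, h04, h13, h14, h24, m02, m03, m04, m13, m14, m24] <;> decide

theorem small_dominating_set_of_R_union_C
    {V : Type*} [Fintype V] [DecidableEq V] (G : SimpleGraph V) (hP5 : P5Free G)
    (C : Set V) (hCne : C.Nonempty) (hconn : (G.induce C).Connected)
    (hbip : ∃ A B : Set V, A ∪ B = C ∧ Disjoint A B ∧ SetIndep G A ∧ SetIndep G B)
    (D : Finset V) (hDC : (↑D : Set V) ⊆ C) (hDcard : D.card ≤ 3)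
    (hdom : C ⊆ closedNbhdSet G (↑D : Set V))
    (hmod : ∀ c : (G.induce (nbhdSet G C \ nbhdSet G (↑D : Set V))).ConnectedComponent,
      IsModule G (Subtype.val '' c.supp)) :
    ∃ Dt : Finset V,
      (↑Dt : Set V) ⊆ (nbhdSet G C \ nbhdSet G (↑D : Set V)) ∪ C ∧
      D ⊆ Dt ∧ (Dt \ D).card ≤ 3 ∧
      ∀ v ∈ (nbhdSet G C \ nbhdSet G (↑D : Set V)) ∪ C,
        v ∈ Dt ∨ ∃ d ∈ Dt, G.Adj v d := by
  classical
  obtain ⟨A, B, hAB, _hdisj, hAi, hBi⟩ := hbip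
  set R : Set V := nbhdSet G C \ nbhdSet G (↑D : Set V) with hRdef
  -- basic facts
  have hRC : ∀ r ∈ R, r ∉ C := fun r hr => hr.1.1
  have hRD : ∀ r ∈ R, ∀ d ∈ D, ¬ G.Adj r d := by
    intro r hr d hd hadj
    exact hr.2 ⟨fun hrD => hRC r hr (hDC hrD), d, hd, hadj⟩
  -- bipartite nonadjacency among common neighbors of a vertex of C
  have hbipadj : ∀ d ∈ C, ∀ c1 ∈ C, ∀ c2 ∈ C, G.Adj d c1 → G.Adj d c2 → ¬ G.Adj c1 c2 := by
    intro d hd c1 hc1 c2 hc2 h1 h2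
    have hd' : d ∈ A ∪ B := by rw [hAB]; exact hd
    have hc1' : c1 ∈ A ∪ B := by rw [hAB]; exact hc1
    have hc2' : c2 ∈ A ∪ B := by rw [hAB]; exact hc2
    rcases hd' with hdA | hdB
    · have hc1B : c1 ∈ B := by
        rcases hc1' with h | h
        · exact absurd h1 (hAi d hdA c1 h)
        · exact h
      have hc2B : c2 ∈ B := by
        rcases hc2' with h | h
        · exact absurd h2 (hAi d hdA c2 h)
        · exact h
      exact hBi c1 hc1B c2 hc2B
    · have hc1A : c1 ∈ A := by
        rcases hc1' with h | h
        · exact h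
        · exact absurd h1 (hBi d hdB c1 h)
      have hc2A : c2 ∈ A := by
        rcases hc2' with h | h
        · exact h
        · exact absurd h2 (hBi d hdB c2 h)
      exact hAi c1 hc1A c2 hc2A
  -- module domination: a C-vertex adjacent to one vertex of a component is adjacent to all
  have hsame : ∀ c ∈ C, ∀ (r r' : ↥R),
      (G.induce R).connectedComponentMk r = (G.induce R).connectedComponentMk r' →
      G.Adj c ↑r → G.Adj c ↑r' := by
    intro c hc r r' hcomp hadj
    have hcK : c ∉ Subtype.val '' ((G.induce R).connectedComponentMk r).supp := by
      rintro ⟨x, _hx, rfl⟩; exact hRC _ x.2 hc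
    rcases hmod _ c hcK with hall | hnone
    · exact hall ↑r'
        ⟨r', (ConnectedComponent.mem_supp_iff _ _).2 hcomp.symm, rfl⟩
    · exact absurd hadj
        (hnone ↑r ⟨r, (ConnectedComponent.mem_supp_iff _ _).2 rfl, rfl⟩)
  -- different components are nonadjacent
  have hdiff : ∀ (r r' : ↥R),
      (G.induce R).connectedComponentMk r ≠ (G.induce R).connectedComponentMk r' →
      ¬ G.Adj ↑r ↑r' := by
    intro r r' hne hadj
    exact hne (ConnectedComponent.sound (SimpleGraph.Adj.reachable (by exact hadj)))
  -- key per-d claim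
  have key : ∀ d ∈ D, ∃ c ∈ C,
      ∀ r ∈ R, ∀ c' ∈ C, G.Adj d c' → G.Adj c' r → G.Adj c r := by
    intro d hd
    by_cases hS : ∃ c ∈ C, G.Adj d c
    · set S : Finset V := Finset.univ.filter (fun c => c ∈ C ∧ G.Adj d c) with hSdef
      have hSne : S.Nonempty := by
        obtain ⟨c, hc, hdc⟩ := hS
        exact ⟨c, by simp [hSdef, hc, hdc]⟩
      obtain ⟨c, hcS, hcmax⟩ := S.exists_max_image
        (fun c => (Finset.univ.filter (fun r => r ∈ R ∧ G.Adj c r)).card) hSne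
      have hcC : c ∈ C := by simpa [hSdef] using (Finset.mem_filter.1 hcS).2.1
      have hcd : G.Adj d c := by simpa [hSdef] using (Finset.mem_filter.1 hcS).2.2
      refine ⟨c, hcC, ?_⟩
      intro r hr c' hc' hdc' hc'r
      by_contra hcr
      have hsub : ∀ x ∈ R, G.Adj c x → G.Adj c' x := by
        intro x hx hcx
        by_cases hcomp : (G.induce R).connectedComponentMk ⟨x, hx⟩ =
            (G.induce R).connectedComponentMk ⟨r, hr⟩
        · exact hsame c' hc' ⟨r, hr⟩ ⟨x, hx⟩ hcomp.symm hc'r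
        · have hxr : ¬ G.Adj x r := hdiff ⟨x, hx⟩ ⟨r, hr⟩ hcomp
          by_contra hxc'
          -- P5 : x - c - d - c' - r
          exact no_induced_P5 hP5 hcx.symm hcd.symm hdc' hc'r
            (fun h => hRD x hx d hd h) (fun h => hxc' h.symm) hxr
            (hbipadj d (hDC hd) c hcC c' hc' hcd hdc') hcr
            (fun h => hRD r hr d hd h.symm)
      have hc'S : c' ∈ S := by simp [hSdef, hc', hdc']
      have hlt : (Finset.univ.filter (fun x => x ∈ R ∧ G.Adj c x)).card <
          (Finset.univ.filter (fun x => x ∈ R ∧ G.Adj c' x)).card := by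
        apply Finset.card_lt_card
        constructor
        · intro x hx
          simp only [Finset.mem_filter, Finset.mem_univ, true_and] at hx ⊢
          exact ⟨hx.1, hsub x hx.1 hx.2⟩
        · intro hcon
          have : r ∈ Finset.univ.filter (fun x => x ∈ R ∧ G.Adj c x) :=
            hcon (by simp [hr, hc'r])
          simp only [Finset.mem_filter] at this
          exact hcr this.2.2
      exact absurd (hcmax c' hc'S) (not_le.2 hlt)
    · exact ⟨d, hDC hd, fun r _ c' hc' hdc' _ => absurd ⟨c', hc', hdc'⟩ hS⟩
  choose! cd hcdC hcddom using key
  refine ⟨D ∪ D.image cd, ?_, Finset.subset_union_left, ?_, ?_⟩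
  · intro x hx
    simp only [Finset.coe_union, Set.mem_union, Finset.mem_coe, Finset.coe_image] at hx
    rcases hx with hx | hx
    · exact Or.inr (hDC hx)
    · obtain ⟨d, hd, rfl⟩ := hx
      exact Or.inr (hcdC d hd)
  · calc ((D ∪ D.image cd) \ D).card ≤ (D.image cd).card := by
          apply Finset.card_le_card
          intro x hx
          rcases Finset.mem_sdiff.1 hx with ⟨hx1, hx2⟩
          rcases Finset.mem_union.1 hx1 with h | h
          · exact absurd h hx2
          · exact h
      _ ≤ D.card := Finset.card_image_le
      _ ≤ 3 := hDcard
  · intro v hv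
    rcases hv with hvR | hvC
    · -- v ∈ R
      obtain ⟨_hvnC, c', hc'C, hvc'⟩ := hvR.1
      rcases hdom hc'C with hc'N | hc'D
      · obtain ⟨_, d, hdD, hc'd⟩ := hc'N
        refine Or.inr ⟨cd d, Finset.mem_union_right _ (Finset.mem_image_of_mem _ hdD), ?_⟩
        exact (hcddom d hdD v hvR c' hc'C hc'd.symm hvc'.symm).symm
      · exfalso
        exact hvR.2 ⟨fun h => hRC v hvR (hDC h), c', hc'D, hvc'⟩
    · rcases hdom hvC with hvN | hvD
      · obtain ⟨_, d, hdD, hvd⟩ := hvN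
        exact Or.inr ⟨d, Finset.mem_union_left _ hdD, hvd⟩
      · exact Or.inl (Finset.mem_union_left _ hvD)
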